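/- Let V be a vertex set with |V| = n partitioned into ℓ ≥ 1 parts P₁, …, P_ℓ, let p, q ∈ [0,1], and let G be a random graph drawn from the stochastic block model with parameters (p, q) on this partition. Let w(u,v) ∈ [0,1] be symmetric propagation probabilities on pairs of vertices and p_m ∈ [0,1] an upper bound with w(u,v) ≤ p_m for all pairs. Then the expected worst-case discrepancy between the true one-round influence and its factored approximation over the parts satisfies E_G[ max_{S ⊆ V} | I_G(S) − Σ_{x=1}^ℓ I_G(S ∩ P_x) | ] ≤ q · n² · (1 − 1/ℓ) · p_m, where the expectation is over the randomness of the SBM graph G. -/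

import Mathlib

open MeasureTheory
open scoped Classical

private lemma aux_one_sub_prod_le_sum {β : Type*} (T : Finset β) (f : β → ℝ)
    (h0 : ∀ u ∈ T, 0 ≤ f u) (h1 : ∀ u ∈ T, f u ≤ 1) :
    1 - ∏ u ∈ T, (1 - f u) ≤ ∑ u ∈ T, f u := by
  classical
  induction T using Finset.cons_induction with
  | empty => simp
  | cons a T ha ih =>
    simp only [Finset.prod_cons, Finset.sum_cons]
    have h0' : ∀ u ∈ T, 0 ≤ f u := fun u hu => h0 u (Finset.mem_cons_of_mem hu)
    have h1' : ∀ u ∈ T, f u ≤ 1 := fun u hu => h1 u (Finset.mem_cons_of_mem hu)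
    have ih' := ih h0' h1'
    have hP0 : (0:ℝ) ≤ ∏ u ∈ T, (1 - f u) :=
      Finset.prod_nonneg fun u hu => by linarith [h1' u hu]
    have hP1 : ∏ u ∈ T, (1 - f u) ≤ 1 :=
      Finset.prod_le_one (fun u hu => by linarith [h1' u hu]) (fun u hu => by linarith [h0' u hu])
    have ha0 := h0 a (Finset.mem_cons_self a T)
    nlinarith

/-- One-round expected influence of a seed set `S` in the vertex set `V` for a
simple graph `G`:
`I_G(S) = |S| + Σ_{v ∈ V∖S} (1 − ∏_{u ∈ S adjacent to v in G} (1 − w u v))`. -/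
noncomputable def oneRoundInfluence {α : Type*} [DecidableEq α]
    (G : SimpleGraph α) (w : α → α → ℝ) (V S : Finset α) : ℝ :=
  (S.card : ℝ) +
    ∑ v ∈ V \ S, (1 - ∏ u ∈ S.filter (fun u => G.Adj u v), (1 - w u v))

/-- Let `V` with `|V| = n` be partitioned into `ℓ ≥ 1` parts, let
`p, q ∈ [0,1]`, and let `G : Ω → SimpleGraph α` be a random graph whose edges are
drawn from the stochastic block model on this partition: each pair of distinct
vertices in the same part is an edge with probability `p`, each cross pair with
probability `q`.  If `w u v ∈ [0,1]` are symmetric propagation probabilities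
bounded by `p_m`, then
`E_G[ max_{S ⊆ V} |I_G(S) − Σₓ I_G(S ∩ Pₓ)| ] ≤ q · n² · (1 − 1/ℓ) · p_m`. -/
theorem sbm_factorization_loss {α Ω : Type*} [DecidableEq α] [MeasurableSpace Ω]
    (μ : Measure Ω) [IsProbabilityMeasure μ]
    (V : Finset α) (n ℓ : ℕ) (hn : V.card = n) (hℓ : 1 ≤ ℓ)
    (P : Fin ℓ → Finset α)
    (hdisj : ∀ x y : Fin ℓ, x ≠ y → Disjoint (P x) (P y))
    (hcover : Finset.univ.biUnion P = V)
    (p q : ℝ) (hp0 : 0 ≤ p) (hp1 : p ≤ 1) (hq0 : 0 ≤ q) (hq1 : q ≤ 1)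
    (G : Ω → SimpleGraph α)
    (hmeas : ∀ u v : α, MeasurableSet {ω | (G ω).Adj u v})
    (hsame : ∀ u v : α, u ∈ V → v ∈ V → u ≠ v →
      (∃ x : Fin ℓ, u ∈ P x ∧ v ∈ P x) →
      μ {ω | (G ω).Adj u v} = ENNReal.ofReal p)
    (hcross : ∀ u v : α, u ∈ V → v ∈ V → u ≠ v →
      (¬ ∃ x : Fin ℓ, u ∈ P x ∧ v ∈ P x) →
      μ {ω | (G ω).Adj u v} = ENNReal.ofReal q)
    (w : α → α → ℝ) (hsymm : ∀ u v, w u v = w v u)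
    (hw0 : ∀ u v, 0 ≤ w u v) (hw1 : ∀ u v, w u v ≤ 1)
    (p_m : ℝ) (hpm : ∀ u v, w u v ≤ p_m) (hpm0 : 0 ≤ p_m) (hpm1 : p_m ≤ 1) :
    ∫ ω, (V.powerset.sup' (Finset.powerset_nonempty V)
        (fun S => |oneRoundInfluence (G ω) w V S
            - ∑ x : Fin ℓ, oneRoundInfluence (G ω) w V (S ∩ P x)|)) ∂μ
      ≤ q * (n : ℝ) ^ 2 * (1 - 1 / (ℓ : ℝ)) * p_m := by
  classical
  -- basic facts about the partition
  have hPsub : ∀ x, P x ⊆ V := fun x => by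
    rw [← hcover]; intro u hu; exact Finset.mem_biUnion.mpr ⟨x, Finset.mem_univ x, hu⟩
  have hmemV : ∀ v ∈ V, ∃ x, v ∈ P x := fun v hv => by
    rw [← hcover] at hv
    obtain ⟨x, -, hx⟩ := Finset.mem_biUnion.mp hv; exact ⟨x, hx⟩
  have huniq : ∀ {u : α} {x y : Fin ℓ}, u ∈ P x → u ∈ P y → x = y := by
    intro u x y hx hy
    by_contra h
    exact (Finset.disjoint_left.mp (hdisj x y h) hx) hy
  set cross : α → α → Prop := fun u v => ¬ ∃ x : Fin ℓ, u ∈ P x ∧ v ∈ P x with hcrossdef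
  set gv : Ω → α → ℝ := fun ω v => ∑ u ∈ V, if cross u v ∧ (G ω).Adj u v then p_m else 0
    with hgvdef
  set g : Ω → ℝ := fun ω => ∑ v ∈ V, gv ω v with hgdef
  have hgv0 : ∀ ω v, 0 ≤ gv ω v := by
    intro ω v
    rw [hgvdef]
    refine Finset.sum_nonneg fun u _ => ?_
    split_ifs <;> simp [hpm0]
  have hg0 : ∀ ω, 0 ≤ g ω := fun ω => Finset.sum_nonneg fun v _ => hgv0 ω v
  -- KEY : sums of influences from parts not containing v are bounded by gv
  have key : ∀ ω, ∀ S : Finset α, S ⊆ V → ∀ v ∈ V, ∀ X : Finset (Fin ℓ),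
      (∀ x ∈ X, v ∉ P x) →
      ∑ x ∈ X, (1 - ∏ u ∈ (S ∩ P x).filter (fun u => (G ω).Adj u v), (1 - w u v))
        ≤ gv ω v := by
    intro ω S hS v hv X hX
    have step1 : ∀ x ∈ X,
        (1 - ∏ u ∈ (S ∩ P x).filter (fun u => (G ω).Adj u v), (1 - w u v))
          ≤ ∑ u ∈ (S ∩ P x).filter (fun u => (G ω).Adj u v), w u v := fun x _ =>
      aux_one_sub_prod_le_sum _ _ (fun u _ => hw0 u v) (fun u _ => hw1 u v)
    refine le_trans (Finset.sum_le_sum step1) ?_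
    have hdisjT : (↑X : Set (Fin ℓ)).PairwiseDisjoint
        (fun x => (S ∩ P x).filter (fun u => (G ω).Adj u v)) := by
      intro x _ y _ hxy
      exact Finset.disjoint_filter_filter
        ((hdisj x y hxy).mono Finset.inter_subset_right Finset.inter_subset_right)
    rw [← Finset.sum_biUnion hdisjT]
    have hBsub : X.biUnion (fun x => (S ∩ P x).filter (fun u => (G ω).Adj u v))
        ⊆ V.filter (fun u => cross u v ∧ (G ω).Adj u v) := by
      intro u hu
      obtain ⟨x, hxX, hu'⟩ := Finset.mem_biUnion.mp hu
      obtain ⟨huS, hAdj⟩ := Finset.mem_filter.mp hu'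
      have huSx := Finset.mem_inter.mp huS
      refine Finset.mem_filter.mpr ⟨hS huSx.1, ?_, hAdj⟩
      rintro ⟨y, huy, hvy⟩
      exact hX x hxX ((huniq huy huSx.2) ▸ hvy)
    calc ∑ u ∈ X.biUnion (fun x => (S ∩ P x).filter (fun u => (G ω).Adj u v)), w u v
        ≤ ∑ u ∈ X.biUnion (fun x => (S ∩ P x).filter (fun u => (G ω).Adj u v)), p_m :=
          Finset.sum_le_sum fun u _ => hpm u v
      _ ≤ ∑ u ∈ V.filter (fun u => cross u v ∧ (G ω).Adj u v), p_m :=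
          Finset.sum_le_sum_of_subset_of_nonneg hBsub (fun _ _ _ => hpm0)
      _ = gv ω v := by rw [hgvdef]; rw [Finset.sum_filter]
  -- pointwise bound of the sup by g
  have pointwise : ∀ ω, (V.powerset.sup' (Finset.powerset_nonempty V)
      (fun S => |oneRoundInfluence (G ω) w V S
          - ∑ x : Fin ℓ, oneRoundInfluence (G ω) w V (S ∩ P x)|)) ≤ g ω := by
    intro ω
    apply Finset.sup'_le
    intro S hSp
    have hS : S ⊆ V := Finset.mem_powerset.mp hSp
    set a : Fin ℓ → α → ℝ :=
      fun x v => ∏ u ∈ (S ∩ P x).filter (fun u => (G ω).Adj u v), (1 - w u v) with hadef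
    have ha0 : ∀ x v, 0 ≤ a x v := fun x v =>
      Finset.prod_nonneg fun u _ => by show (0:ℝ) ≤ 1 - w u v; linarith [hw1 u v]
    have ha1 : ∀ x v, a x v ≤ 1 := fun x v =>
      Finset.prod_le_one (fun u _ => by show (0:ℝ) ≤ 1 - w u v; linarith [hw1 u v])
        (fun u _ => by show 1 - w u v ≤ 1; linarith [hw0 u v])
    have hSbi : S = Finset.univ.biUnion (fun x => S ∩ P x) := by
      ext u
      simp only [Finset.mem_biUnion, Finset.mem_inter, Finset.mem_univ, true_and]
      constructor
      · intro hu; obtain ⟨x, hx⟩ := hmemV u (hS hu); exact ⟨x, hu, hx⟩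
      · rintro ⟨x, hu, -⟩; exact hu
    have hdisjSP : ∀ x ∈ (Finset.univ : Finset (Fin ℓ)), ∀ y ∈ Finset.univ, x ≠ y →
        Disjoint (S ∩ P x) (S ∩ P y) := fun x _ y _ hxy =>
      (hdisj x y hxy).mono Finset.inter_subset_right Finset.inter_subset_right
    have hcard : (S.card : ℝ) = ∑ x : Fin ℓ, ((S ∩ P x).card : ℝ) := by
      have h1 : S.card = ∑ x : Fin ℓ, (S ∩ P x).card := by
        conv_lhs => rw [hSbi]
        exact Finset.card_biUnion hdisjSP
      rw [h1]; push_cast; ring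
    have hprod : ∀ v, ∏ u ∈ S.filter (fun u => (G ω).Adj u v), (1 - w u v)
        = ∏ x : Fin ℓ, a x v := by
      intro v
      have h2 : S.filter (fun u => (G ω).Adj u v)
          = Finset.univ.biUnion (fun x => (S ∩ P x).filter (fun u => (G ω).Adj u v)) := by
        conv_lhs => rw [hSbi]
        rw [Finset.filter_biUnion]
      rw [h2, Finset.prod_biUnion]
      intro x _ y _ hxy
      exact Finset.disjoint_filter_filter
        ((hdisj x y hxy).mono Finset.inter_subset_right Finset.inter_subset_right)
    have hsd : ∀ x : Fin ℓ, V \ (S ∩ P x) = (V \ S) ∪ (S \ P x) := by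
      intro x; ext v
      simp only [Finset.mem_sdiff, Finset.mem_union, Finset.mem_inter, not_and]
      constructor
      · rintro ⟨hvV, h⟩
        by_cases hvS : v ∈ S
        · right; exact ⟨hvS, h hvS⟩
        · left; exact ⟨hvV, hvS⟩
      · rintro (⟨hvV, hvS⟩ | ⟨hvS, hvP⟩)
        · exact ⟨hvV, fun h => absurd h hvS⟩
        · exact ⟨hS hvS, fun _ => hvP⟩
    have hdisj2 : ∀ x : Fin ℓ, Disjoint (V \ S) (S \ P x) := by
      intro x
      refine Finset.disjoint_left.mpr fun v hv hv2 => ?_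
      exact (Finset.mem_sdiff.mp hv).2 (Finset.mem_sdiff.mp hv2).1
    have hIS : oneRoundInfluence (G ω) w V S
        = (∑ x : Fin ℓ, ((S ∩ P x).card : ℝ)) + ∑ v ∈ V \ S, (1 - ∏ x : Fin ℓ, a x v) := by
      simp only [oneRoundInfluence]
      rw [hcard]
      congr 1
      exact Finset.sum_congr rfl fun v _ => by rw [hprod v]
    have hIx : ∀ x : Fin ℓ, oneRoundInfluence (G ω) w V (S ∩ P x)
        = ((S ∩ P x).card : ℝ)
          + (∑ v ∈ V \ S, (1 - a x v) + ∑ v ∈ S \ P x, (1 - a x v)) := by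
      intro x
      simp only [oneRoundInfluence, hadef]
      rw [hsd x, Finset.sum_union (hdisj2 x)]
    have e1 : ∑ x : Fin ℓ, oneRoundInfluence (G ω) w V (S ∩ P x)
        = (∑ x : Fin ℓ, ((S ∩ P x).card : ℝ))
          + (∑ v ∈ V \ S, ∑ x : Fin ℓ, (1 - a x v)
          + ∑ x : Fin ℓ, ∑ v ∈ S \ P x, (1 - a x v)) := by
      rw [Finset.sum_congr rfl fun x _ => hIx x, Finset.sum_add_distrib,
        Finset.sum_add_distrib, Finset.sum_comm]
    have hdiff : oneRoundInfluence (G ω) w V S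
        - ∑ x : Fin ℓ, oneRoundInfluence (G ω) w V (S ∩ P x)
        = (∑ v ∈ V \ S, ((1 - ∏ x : Fin ℓ, a x v) - ∑ x : Fin ℓ, (1 - a x v)))
          - ∑ x : Fin ℓ, ∑ v ∈ S \ P x, (1 - a x v) := by
      rw [hIS, e1]
      conv_rhs => rw [Finset.sum_sub_distrib]
      ring
    have hterm_le : ∀ v ∈ V \ S,
        (1 - ∏ x : Fin ℓ, a x v) - ∑ x : Fin ℓ, (1 - a x v) ≤ 0 := by
      intro v _
      have h3 := aux_one_sub_prod_le_sum Finset.univ (fun x => 1 - a x v)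
        (fun x _ => by show (0:ℝ) ≤ 1 - a x v; linarith [ha1 x v])
        (fun x _ => by show 1 - a x v ≤ 1; linarith [ha0 x v])
      simp only [sub_sub_cancel] at h3
      linarith
    have hterm_ge : ∀ v ∈ V \ S,
        -((1 - ∏ x : Fin ℓ, a x v) - ∑ x : Fin ℓ, (1 - a x v)) ≤ gv ω v := by
      intro v hv
      have hvV : v ∈ V := (Finset.mem_sdiff.mp hv).1
      obtain ⟨x0, hx0⟩ := hmemV v hvV
      have hsplit : ∑ x : Fin ℓ, (1 - a x v)
          = (1 - a x0 v) + ∑ x ∈ Finset.univ.erase x0, (1 - a x v) :=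
        (Finset.add_sum_erase _ _ (Finset.mem_univ x0)).symm
      have hprodle : ∏ x : Fin ℓ, a x v ≤ a x0 v := by
        rw [← Finset.prod_erase_mul Finset.univ _ (Finset.mem_univ x0)]
        exact mul_le_of_le_one_left (ha0 x0 v)
          (Finset.prod_le_one (fun x _ => ha0 x v) (fun x _ => ha1 x v))
      have hkey := key ω S hS v hvV (Finset.univ.erase x0)
        (fun x hx hvPx => (Finset.ne_of_mem_erase hx) (huniq hvPx hx0))
      have hkey' : ∑ x ∈ Finset.univ.erase x0, (1 - a x v) ≤ gv ω v := by
        simpa only [hadef] using hkey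
      have hax0 := ha1 x0 v
      linarith
    have hB0 : 0 ≤ ∑ x : Fin ℓ, ∑ v ∈ S \ P x, (1 - a x v) :=
      Finset.sum_nonneg fun x _ => Finset.sum_nonneg fun v _ => by
        show (0:ℝ) ≤ 1 - a x v; linarith [ha1 x v]
    have hBle : ∑ x : Fin ℓ, ∑ v ∈ S \ P x, (1 - a x v) ≤ ∑ v ∈ S, gv ω v := by
      have swap : ∑ x : Fin ℓ, ∑ v ∈ S \ P x, (1 - a x v)
          = ∑ v ∈ S, ∑ x ∈ Finset.univ.filter (fun x => v ∉ P x), (1 - a x v) := by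
        have h4 : ∀ x : Fin ℓ, ∑ v ∈ S \ P x, (1 - a x v)
            = ∑ v ∈ S, if v ∉ P x then (1 - a x v) else 0 := by
          intro x
          rw [Finset.sdiff_eq_filter, Finset.sum_filter]
        rw [Finset.sum_congr rfl fun x _ => h4 x, Finset.sum_comm]
        exact Finset.sum_congr rfl fun v _ => (Finset.sum_filter _ _).symm
      rw [swap]
      refine Finset.sum_le_sum fun v hv => ?_
      have hkey := key ω S hS v (hS hv) (Finset.univ.filter (fun x => v ∉ P x))
        (fun x hx => (Finset.mem_filter.mp hx).2)
      simpa only [hadef] using hkey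
    rw [hdiff, abs_le]
    constructor
    · have h5 : ∑ v ∈ V \ S, gv ω v ≤ ∑ v ∈ V \ S, gv ω v := le_refl _
      have h6 : ∑ v ∈ V \ S, -((1 - ∏ x : Fin ℓ, a x v) - ∑ x : Fin ℓ, (1 - a x v))
          ≤ ∑ v ∈ V \ S, gv ω v := Finset.sum_le_sum hterm_ge
      rw [Finset.sum_neg_distrib] at h6
      have h7 : ∑ v ∈ V \ S, gv ω v + ∑ v ∈ S, gv ω v = ∑ v ∈ V, gv ω v :=
        Finset.sum_sdiff hS
      have hgω : g ω = ∑ v ∈ V, gv ω v := by rw [hgdef]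
      linarith
    · have h8 : ∑ v ∈ V \ S, ((1 - ∏ x : Fin ℓ, a x v) - ∑ x : Fin ℓ, (1 - a x v)) ≤ 0 :=
        Finset.sum_nonpos hterm_le
      have := hg0 ω
      linarith
  -- integrability of each summand
  have hintuv : ∀ u v : α,
      Integrable (fun ω => if cross u v ∧ (G ω).Adj u v then p_m else 0) μ := by
    intro u v
    by_cases hc : cross u v
    · have heq : (fun ω => if cross u v ∧ (G ω).Adj u v then p_m else 0)
          = Set.indicator {ω | (G ω).Adj u v} (fun _ => p_m) := by
        funext ω
        by_cases hA : (G ω).Adj u v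
        · rw [if_pos ⟨hc, hA⟩]
          exact (Set.indicator_of_mem (show ω ∈ {ω' | (G ω').Adj u v} from hA)
            (fun _ => p_m)).symm
        · rw [if_neg (fun h => hA h.2)]
          exact (Set.indicator_of_notMem (show ω ∉ {ω' | (G ω').Adj u v} from hA)
            (fun _ => p_m)).symm
      rw [heq]
      exact (integrable_const p_m).indicator (hmeas u v)
    · simp only [hc, false_and, if_false]
      exact integrable_const 0
  have hint : Integrable g μ := by
    rw [hgdef]
    refine integrable_finset_sum _ fun v _ => ?_
    rw [hgvdef]
    exact integrable_finset_sum _ fun u _ => hintuv u v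
  -- value of the integral of g
  have hI : ∫ ω, g ω ∂μ = ∑ v ∈ V, ∑ u ∈ V, (if cross u v then q * p_m else 0) := by
    rw [hgdef]
    rw [integral_finset_sum _ (fun v _ => by
      rw [hgvdef]; exact integrable_finset_sum _ fun u _ => hintuv u v)]
    refine Finset.sum_congr rfl fun v hv => ?_
    rw [hgvdef]
    rw [integral_finset_sum _ (fun u _ => hintuv u v)]
    refine Finset.sum_congr rfl fun u hu => ?_
    by_cases hc : cross u v
    · have hne : u ≠ v := by
        rintro rfl
        obtain ⟨x, hx⟩ := hmemV u hu
        exact hc ⟨x, hx, hx⟩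
      have hc' : ¬ ∃ x : Fin ℓ, u ∈ P x ∧ v ∈ P x := by
        rw [hcrossdef] at hc; exact hc
      have heq : (fun ω => if cross u v ∧ (G ω).Adj u v then p_m else 0)
          = Set.indicator {ω | (G ω).Adj u v} (fun _ => p_m) := by
        funext ω
        by_cases hA : (G ω).Adj u v
        · rw [if_pos ⟨hc, hA⟩]
          exact (Set.indicator_of_mem (show ω ∈ {ω' | (G ω').Adj u v} from hA)
            (fun _ => p_m)).symm
        · rw [if_neg (fun h => hA h.2)]
          exact (Set.indicator_of_notMem (show ω ∉ {ω' | (G ω').Adj u v} from hA)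
            (fun _ => p_m)).symm
      rw [heq, integral_indicator_const _ (hmeas u v), measureReal_def,
        hcross u v hu hv hne hc', if_pos hc, ENNReal.toReal_ofReal hq0, smul_eq_mul]
    · simp [hc]
  -- counting the cross pairs
  have hsplitV : ∀ F : α → ℝ, ∑ v ∈ V, F v = ∑ x : Fin ℓ, ∑ v ∈ P x, F v := by
    intro F
    rw [← hcover]
    exact Finset.sum_biUnion fun x _ y _ hxy => hdisj x y hxy
  have hinner : ∀ v ∈ V, ∀ x0 : Fin ℓ, v ∈ P x0 →
      ∑ u ∈ V, (if cross u v then q * p_m else 0)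
        = ((n : ℝ) - ((P x0).card : ℝ)) * (q * p_m) := by
    intro v hv x0 hx0
    rw [← Finset.sum_filter]
    have hfe : V.filter (fun u => cross u v) = V \ P x0 := by
      ext u
      simp only [Finset.mem_filter, Finset.mem_sdiff, hcrossdef]
      constructor
      · rintro ⟨huV, hcr⟩
        exact ⟨huV, fun huP => hcr ⟨x0, huP, hx0⟩⟩
      · rintro ⟨huV, huP⟩
        refine ⟨huV, ?_⟩
        rintro ⟨y, huy, hvy⟩
        exact huP ((huniq hvy hx0) ▸ huy)
    rw [hfe, Finset.sum_const, Finset.card_sdiff_of_subset (hPsub x0), nsmul_eq_mul, hn]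
    rw [Nat.cast_sub (by rw [← hn]; exact Finset.card_le_card (hPsub x0))]
  have hcount : ∑ v ∈ V, ∑ u ∈ V, (if cross u v then q * p_m else 0)
      ≤ q * (n : ℝ) ^ 2 * (1 - 1 / (ℓ : ℝ)) * p_m := by
    rw [hsplitV]
    have hval : ∀ x : Fin ℓ, ∑ v ∈ P x, ∑ u ∈ V, (if cross u v then q * p_m else 0)
        = ((P x).card : ℝ) * (((n : ℝ) - ((P x).card : ℝ)) * (q * p_m)) := by
      intro x
      rw [Finset.sum_congr rfl fun v hv => hinner v (hPsub x hv) x hv,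
        Finset.sum_const, nsmul_eq_mul]
    rw [Finset.sum_congr rfl fun x _ => hval x]
    set c : Fin ℓ → ℝ := fun x => ((P x).card : ℝ) with hcdef
    have hsumcN : ∑ x : Fin ℓ, (P x).card = n := by
      rw [← hn, ← hcover]
      exact (Finset.card_biUnion fun x _ y _ h => hdisj x y h).symm
    have hsumc : ∑ x : Fin ℓ, c x = (n : ℝ) := by
      rw [hcdef]
      push_cast [← hsumcN]
      rfl
    have hℓpos : (0 : ℝ) < (ℓ : ℝ) := by
      have : (0 : ℕ) < ℓ := hℓ
      exact_mod_cast this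
    have hCS : (n : ℝ) ^ 2 ≤ (ℓ : ℝ) * ∑ x : Fin ℓ, (c x) ^ 2 := by
      have h9 := Finset.sum_mul_sq_le_sq_mul_sq Finset.univ (fun _ => (1 : ℝ)) c
      simp only [one_mul, one_pow, Finset.sum_const, Finset.card_univ,
        Fintype.card_fin, nsmul_eq_mul, mul_one] at h9
      rw [hsumc] at h9
      exact h9
    have e : ∑ x : Fin ℓ, c x * (((n : ℝ) - c x) * (q * p_m))
        = (q * p_m) * ((n : ℝ) * (n : ℝ) - ∑ x : Fin ℓ, (c x) ^ 2) := by
      calc ∑ x : Fin ℓ, c x * (((n : ℝ) - c x) * (q * p_m))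
          = ∑ x : Fin ℓ, (q * p_m) * ((n : ℝ) * c x - (c x) ^ 2) :=
            Finset.sum_congr rfl fun x _ => by ring
        _ = (q * p_m) * ∑ x : Fin ℓ, ((n : ℝ) * c x - (c x) ^ 2) :=
            (Finset.mul_sum _ _ _).symm
        _ = (q * p_m) * ((n : ℝ) * (n : ℝ) - ∑ x : Fin ℓ, (c x) ^ 2) := by
            rw [Finset.sum_sub_distrib, ← Finset.mul_sum, hsumc]
    rw [e]
    have h1 : (n : ℝ) ^ 2 / (ℓ : ℝ) ≤ ∑ x : Fin ℓ, (c x) ^ 2 := by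
      rw [div_le_iff₀ hℓpos]
      linarith [hCS]
    have hqp : 0 ≤ q * p_m := mul_nonneg hq0 hpm0
    have hnn : (n : ℝ) * (n : ℝ) = (n : ℝ) ^ 2 := by ring
    have h2 : (n : ℝ) * (n : ℝ) - ∑ x : Fin ℓ, (c x) ^ 2
        ≤ (n : ℝ) ^ 2 * (1 - 1 / (ℓ : ℝ)) := by
      have h3 : (n : ℝ) ^ 2 * (1 - 1 / (ℓ : ℝ)) = (n : ℝ) ^ 2 - (n : ℝ) ^ 2 / (ℓ : ℝ) := by
        rw [mul_sub, mul_one, mul_one_div]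
      rw [h3]
      linarith [h1]
    calc (q * p_m) * ((n : ℝ) * (n : ℝ) - ∑ x : Fin ℓ, (c x) ^ 2)
        ≤ (q * p_m) * ((n : ℝ) ^ 2 * (1 - 1 / (ℓ : ℝ))) := mul_le_mul_of_nonneg_left h2 hqp
      _ = q * (n : ℝ) ^ 2 * (1 - 1 / (ℓ : ℝ)) * p_m := by ring
  calc ∫ ω, (V.powerset.sup' (Finset.powerset_nonempty V)
        (fun S => |oneRoundInfluence (G ω) w V S
            - ∑ x : Fin ℓ, oneRoundInfluence (G ω) w V (S ∩ P x)|)) ∂μ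
      ≤ ∫ ω, g ω ∂μ := by
        refine integral_mono_of_nonneg (Filter.Eventually.of_forall fun ω => ?_) hint
          (Filter.Eventually.of_forall fun ω => pointwise ω)
        show (0:ℝ) ≤ V.powerset.sup' (Finset.powerset_nonempty V)
          (fun S => |oneRoundInfluence (G ω) w V S
            - ∑ x : Fin ℓ, oneRoundInfluence (G ω) w V (S ∩ P x)|)
        exact le_trans (abs_nonneg _)
          (Finset.le_sup' (fun S => |oneRoundInfluence (G ω) w V S
            - ∑ x : Fin ℓ, oneRoundInfluence (G ω) w V (S ∩ P x)|)
            (Finset.mem_powerset.mpr (le_refl V)))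
    _ = ∑ v ∈ V, ∑ u ∈ V, (if cross u v then q * p_m else 0) := hI
    _ ≤ q * (n : ℝ) ^ 2 * (1 - 1 / (ℓ : ℝ)) * p_m := hcount
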